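/- For every positive integer n, Φ(n) = ∑_{d ∣ n} μ(d)·(2^{n/d} − 1), where μ is the Möbius function and the sum is over positive divisors d of n. -/

import Mathlib

/-- `Phi n` is the number of nonempty subsets of `{1, ..., n}` relatively prime to `n`. -/
def Phi (n : ℕ) : ℕ :=
  ((Finset.Icc 1 n).powerset.filter fun A => A.Nonempty ∧ (insert n A).gcd id = 1).card

open Finset in
lemma card_gcd_fiber (n e : ℕ) (hn : 0 < n) (he : e ∣ n) :
    ((Finset.Icc 1 n).powerset.filter
      fun A => A.Nonempty ∧ (insert n A).gcd id = e).card = Phi (n / e) := by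
  have he0 : 0 < e := Nat.pos_of_dvd_of_pos he hn
  apply Finset.card_bij (fun A _ => A.image (· / e))
  · rintro A hA
    simp only [mem_filter, mem_powerset] at hA ⊢
    obtain ⟨hsub, hne, hgcd⟩ := hA
    have hdvd : ∀ a ∈ A, e ∣ a := fun a ha => hgcd ▸ Finset.gcd_dvd (Finset.mem_insert_of_mem ha)
    refine ⟨?_, hne.image _, ?_⟩
    · intro b hb
      simp only [mem_image] at hb
      obtain ⟨a, ha, rfl⟩ := hb
      have := hsub ha
      simp only [mem_Icc] at this ⊢
      exact ⟨(Nat.one_le_div_iff he0).2 (Nat.le_of_dvd (this.1) (hdvd a ha)),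
        Nat.div_le_div_right this.2⟩
    · have : insert (n / e) (A.image (· / e)) = (insert n A).image (· / e) := by
        simp [Finset.image_insert]
      rw [this, Finset.gcd_image]
      have := Finset.gcd_div_id_eq_one (s := insert n A) (a := n)
        (Finset.mem_insert_self n A) hn.ne'
      rw [hgcd] at this
      exact this
  · intro A₁ h₁ A₂ h₂ h
    simp only [mem_filter, mem_powerset] at h₁ h₂
    have hd₁ : ∀ a ∈ A₁, e ∣ a := fun a ha =>
      h₁.2.2 ▸ Finset.gcd_dvd (Finset.mem_insert_of_mem ha)
    have hd₂ : ∀ a ∈ A₂, e ∣ a := fun a ha =>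
      h₂.2.2 ▸ Finset.gcd_dvd (Finset.mem_insert_of_mem ha)
    have key : ∀ (A : Finset ℕ), (∀ a ∈ A, e ∣ a) → (A.image (· / e)).image (· * e) = A := by
      intro A hA
      rw [Finset.image_image]
      ext a
      simp only [mem_image, Function.comp_apply]
      constructor
      · rintro ⟨x, hx, rfl⟩
        rwa [Nat.div_mul_cancel (hA x hx)]
      · intro ha
        exact ⟨a, ha, Nat.div_mul_cancel (hA a ha)⟩
    rw [← key A₁ hd₁, ← key A₂ hd₂, h]
  · intro B hB
    simp only [mem_filter, mem_powerset] at hB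
    obtain ⟨hsub, hne, hgcd⟩ := hB
    refine ⟨B.image (· * e), ?_, ?_⟩
    · simp only [mem_filter, mem_powerset]
      refine ⟨?_, hne.image _, ?_⟩
      · intro a ha
        simp only [mem_image] at ha
        obtain ⟨b, hb, rfl⟩ := ha
        have := hsub hb
        simp only [mem_Icc] at this ⊢
        constructor
        · exact le_trans he0 (Nat.le_mul_of_pos_left e (lt_of_lt_of_le one_pos this.1))
        · calc b * e ≤ (n / e) * e := Nat.mul_le_mul_right e this.2
            _ = n := Nat.div_mul_cancel he
      · have : insert n (B.image (· * e)) = (insert (n / e) B).image (· * e) := by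
          simp [Finset.image_insert, Nat.div_mul_cancel he]
        rw [this, Finset.gcd_image]
        have : ((insert (n / e) B).gcd fun x => id x * e) = (insert (n / e) B).gcd id * e := by
          simpa using Finset.gcd_mul_right (s := insert (n / e) B) (f := id) (a := e)
        simpa [hgcd] using this
    · rw [Finset.image_image]
      ext b
      simp only [mem_image, Function.comp_apply]
      constructor
      · rintro ⟨x, hx, rfl⟩
        rwa [Nat.mul_div_cancel x he0]
      · intro hb
        exact ⟨b, hb, Nat.mul_div_cancel b he0⟩

open Finset in
lemma sum_Phi (n : ℕ) (hn : 0 < n) :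
    ∑ d ∈ n.divisors, Phi d = 2 ^ n - 1 := by
  have h1 : ∑ e ∈ n.divisors, Phi (n / e) = ∑ d ∈ n.divisors, Phi d :=
    Nat.sum_div_divisors n Phi
  rw [← h1]
  have h2 : ∀ e ∈ n.divisors,
      Phi (n / e) = ((Finset.Icc 1 n).powerset.filter
        fun A => A.Nonempty ∧ (insert n A).gcd id = e).card := by
    intro e he
    rw [card_gcd_fiber n e hn (Nat.dvd_of_mem_divisors he)]
  rw [Finset.sum_congr rfl h2]
  have hfib : ((Finset.Icc 1 n).powerset.filter fun A => A.Nonempty).card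
      = ∑ e ∈ n.divisors, (((Finset.Icc 1 n).powerset.filter fun A => A.Nonempty).filter
        fun A => (insert n A).gcd id = e).card := by
    apply Finset.card_eq_sum_card_fiberwise (f := fun A : Finset ℕ => (insert n A).gcd id)
    intro A hA
    simp only [mem_coe, mem_filter, mem_powerset] at hA ⊢
    rw [Nat.mem_divisors]
    exact ⟨Finset.gcd_dvd (Finset.mem_insert_self n A), hn.ne'⟩
  have hcombine : ∀ e : ℕ, (((Finset.Icc 1 n).powerset.filter fun A => A.Nonempty).filter
        fun A => (insert n A).gcd id = e)
      = (Finset.Icc 1 n).powerset.filter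
        fun A => A.Nonempty ∧ (insert n A).gcd id = e := by
    intro e; rw [Finset.filter_filter]
  simp only [hcombine] at hfib
  rw [← hfib]
  have hcard : ((Finset.Icc 1 n).powerset.filter fun A => A.Nonempty).card
      = 2 ^ n - 1 := by
    have : ((Finset.Icc 1 n).powerset.filter fun A => A.Nonempty)
        = (Finset.Icc 1 n).powerset.erase ∅ := by
      ext A
      simp [Finset.nonempty_iff_ne_empty, and_comm]
    rw [this, Finset.card_erase_of_mem (Finset.empty_mem_powerset _),
      Finset.card_powerset, Nat.card_Icc]
    simp
  rw [hcard]

/-- Nathanson: `Φ(n) = ∑_{d ∣ n} μ(d) (2^{n/d} - 1)`. -/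
theorem Phi_formula (n : ℕ) (hn : 0 < n) :
    (Phi n : ℤ) = ∑ d ∈ n.divisors,
      (ArithmeticFunction.moebius d) * (2 ^ (n / d) - 1) := by
  have key : ∀ m > 0, ∑ d ∈ m.divisors, ((Phi d : ℤ)) = (2 ^ m - 1 : ℤ) := by
    intro m hm
    have := sum_Phi m hm
    have h2 : (1 : ℕ) ≤ 2 ^ m := Nat.one_le_two_pow
    rw [← Nat.cast_sum, this, Nat.cast_sub h2]
    push_cast
    ring
  have := (ArithmeticFunction.sum_eq_iff_sum_mul_moebius_eq
    (f := fun d => (Phi d : ℤ)) (g := fun m => (2 ^ m - 1 : ℤ))).mp key n hn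
  rw [← Nat.sum_divisorsAntidiagonal (fun d e => (ArithmeticFunction.moebius d : ℤ) * (2 ^ e - 1))]
  simpa using this.symm
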